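/- arXiv:1904.01998 — 2 statements merged into one kernel-verified Lean document; each statement's English description precedes it below -/
import Mathlib

section
/- Let Σ ⊂ ℝ^{n−1} be a bounded rectangle, ε > 0, Ω_ε^M := Σ × (−ε, ε), and let φ : Σ × [−ε, ε] → ℝ be continuously differentiable. Define the average φ̄(x̄) := (1/(2ε)) ∫_{−ε}^{ε} φ(x̄, x_n) dx_n. Then for the trace on the upper boundary it holds that ‖φ(·, ε) − φ̄‖_{L²(Σ)} ≤ C √ε ‖∂_n φ‖_{L²(Ω_ε^M)} for a constant C > 0 independent of ε and φ. -/
open MeasureTheory Set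

/-- Cauchy–Schwarz via the quadratic trick. -/
lemma sq_integral_abs_le {α : Type*} [MeasurableSpace α] (μ : Measure α) [IsFiniteMeasure μ]
    (f : α → ℝ) (hi : Integrable f μ) (hi2 : Integrable (fun t => f t ^ 2) μ) :
    (∫ t, |f t| ∂μ) ^ 2 ≤ (μ Set.univ).toReal * ∫ t, f t ^ 2 ∂μ := by
  set V := (μ Set.univ).toReal with hV
  set J := ∫ t, |f t| ∂μ with hJ
  set I := ∫ t, f t ^ 2 ∂μ with hI
  have hVnn : 0 ≤ V := ENNReal.toReal_nonneg
  have hInn : 0 ≤ I := integral_nonneg fun t => sq_nonneg _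
  have expand : ∀ c : ℝ, ∫ t, (c - |f t|) ^ 2 ∂μ = c ^ 2 * V - 2 * c * J + I := by
    intro c
    have h1 : (fun t => (c - |f t|) ^ 2) = fun t => (c ^ 2 - 2 * c * |f t|) + f t ^ 2 := by
      funext t
      have := sq_abs (f t)
      ring_nf
      nlinarith [sq_abs (f t)]
    have e1 : Integrable (fun t => c ^ 2 - 2 * c * |f t|) μ := by
      exact (integrable_const _).sub (hi.abs.const_mul _)
    rw [h1, integral_add e1 hi2, integral_sub (integrable_const _) (hi.abs.const_mul _),
      integral_const, integral_const_mul]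
    simp [smul_eq_mul, mul_comm, measureReal_def, hV, hJ, hI]
  rcases eq_or_lt_of_le hVnn with h0 | hVpos
  · -- V = 0, so μ = 0
    have hμ : μ = 0 := by
      have : μ Set.univ = 0 := by
        have := (ENNReal.toReal_eq_zero_iff _).mp h0.symm
        rcases this with h | h
        · exact h
        · exact absurd h (measure_ne_top μ _)
      exact Measure.measure_univ_eq_zero.mp this
    simp [hJ, hI, hμ, ← h0]
  · have key := integral_nonneg (μ := μ) (f := fun t => (J / V - |f t|) ^ 2)
      (fun t => sq_nonneg _)
    rw [expand (J / V)] at key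
    have hVne : V ≠ 0 := ne_of_gt hVpos
    have h1 : (J / V) ^ 2 * V - 2 * (J / V) * J + I = I - J ^ 2 / V := by
      field_simp
      ring
    rw [h1] at key
    have h2 : J ^ 2 / V ≤ I := by linarith
    calc J ^ 2 = (J ^ 2 / V) * V := by field_simp
      _ ≤ I * V := mul_le_mul_of_nonneg_right h2 hVnn
      _ = V * I := mul_comm _ _

/-- Pointwise (in the horizontal variable) thin-layer estimate. -/
lemma pointwise_est (ε : ℝ) (hε : 0 < ε) (g : ℝ → ℝ) (hg : ContDiff ℝ 1 g) :
    (g ε - (1 / (2 * ε)) * ∫ t in Set.Ioo (-ε) ε, g t) ^ 2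
      ≤ (2 * ε) * ∫ t in Set.Ioo (-ε) ε, (deriv g t) ^ 2 := by
  have hgc : Continuous g := hg.continuous
  have hg' : Continuous (deriv g) := hg.continuous_deriv le_rfl
  have hle : (-ε : ℝ) ≤ ε := by linarith
  -- integrabilities on Ioo
  have hIoo : ∀ (h : ℝ → ℝ), Continuous h → IntegrableOn h (Set.Ioo (-ε) ε) := by
    intro h hh
    exact (hh.continuousOn.integrableOn_compact isCompact_Icc).mono_set Ioo_subset_Icc_self
  haveI : IsFiniteMeasure (volume.restrict (Set.Ioo (-ε) ε)) := by
    constructor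
    rw [Measure.restrict_apply_univ, Real.volume_Ioo]
    exact ENNReal.ofReal_lt_top
  have hvol : (volume (Set.Ioo (-ε) ε)).toReal = 2 * ε := by
    rw [Real.volume_Ioo, ENNReal.toReal_ofReal (by linarith)]
    ring
  set J := ∫ t in Set.Ioo (-ε) ε, |deriv g t| with hJdef
  set I := ∫ t in Set.Ioo (-ε) ε, (deriv g t) ^ 2 with hIdef
  have hInn : 0 ≤ I := integral_nonneg fun t => sq_nonneg _
  -- step 1 : |g ε - g t| ≤ J for t ∈ Icc
  have step1 : ∀ t ∈ Set.Icc (-ε) ε, |g ε - g t| ≤ J := by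
    intro t ht
    have hftc : ∫ s in t..ε, deriv g s = g ε - g t :=
      intervalIntegral.integral_deriv_eq_sub (fun s _ => hg.differentiable one_ne_zero s)
        (hg'.intervalIntegrable t ε)
    rw [← hftc]
    calc |∫ s in t..ε, deriv g s| ≤ ∫ s in t..ε, |deriv g s| :=
          intervalIntegral.abs_integral_le_integral_abs ht.2
      _ ≤ ∫ s in (-ε)..ε, |deriv g s| := by
          apply intervalIntegral.integral_mono_interval ht.1 ht.2 le_rfl
          · exact Filter.Eventually.of_forall fun s => abs_nonneg _
          · exact (hg'.abs.intervalIntegrable _ _)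
      _ = J := by
          rw [hJdef, intervalIntegral.integral_of_le hle, integral_Ioc_eq_integral_Ioo]
  -- step 2 : average rewrite
  have hconst : ∫ _t in Set.Ioo (-ε) ε, g ε = (2 * ε) * g ε := by
    rw [setIntegral_const, smul_eq_mul, measureReal_def, hvol]
  have havg : g ε - (1 / (2 * ε)) * ∫ t in Set.Ioo (-ε) ε, g t
      = (1 / (2 * ε)) * ∫ t in Set.Ioo (-ε) ε, (g ε - g t) := by
    rw [integral_sub (hIoo _ continuous_const) (hIoo _ hgc), hconst]
    field_simp
  -- step 3 : bound
  have step3 : |g ε - (1 / (2 * ε)) * ∫ t in Set.Ioo (-ε) ε, g t| ≤ J := by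
    rw [havg, abs_mul, abs_of_nonneg (by positivity : (0:ℝ) ≤ 1 / (2 * ε))]
    have h1 : |∫ t in Set.Ioo (-ε) ε, (g ε - g t)| ≤ ∫ t in Set.Ioo (-ε) ε, |g ε - g t| := by
      simpa using norm_integral_le_integral_norm (μ := volume.restrict (Set.Ioo (-ε) ε))
        (f := fun t => g ε - g t)
    have h2 : ∫ t in Set.Ioo (-ε) ε, |g ε - g t| ≤ ∫ _t in Set.Ioo (-ε) ε, J := by
      apply setIntegral_mono_on ((hIoo _ (continuous_const.sub hgc)).abs)
        ((integrableOn_const_iff (by finiteness)).mpr (Or.inr (by rw [Real.volume_Ioo]; exact ENNReal.ofReal_lt_top)))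
        measurableSet_Ioo
      intro t ht
      exact step1 t (Ioo_subset_Icc_self ht)
    have h3 : ∫ _t in Set.Ioo (-ε) ε, J = (2 * ε) * J := by
      rw [setIntegral_const, smul_eq_mul, measureReal_def, hvol]
    calc 1 / (2 * ε) * |∫ t in Set.Ioo (-ε) ε, (g ε - g t)|
        ≤ 1 / (2 * ε) * ((2 * ε) * J) := by
          apply mul_le_mul_of_nonneg_left (le_trans h1 (le_trans h2 h3.le)) (by positivity)
      _ = J := by field_simp
  -- Cauchy–Schwarz : J ^ 2 ≤ 2ε * I
  have hcs : J ^ 2 ≤ (2 * ε) * I := by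
    have := sq_integral_abs_le (volume.restrict (Set.Ioo (-ε) ε)) (deriv g)
      (hIoo _ hg') (hIoo _ (hg'.pow 2))
    rwa [Measure.restrict_apply_univ, hvol] at this
  calc (g ε - (1 / (2 * ε)) * ∫ t in Set.Ioo (-ε) ε, g t) ^ 2
      = |g ε - (1 / (2 * ε)) * ∫ t in Set.Ioo (-ε) ε, g t| ^ 2 := (sq_abs _).symm
    _ ≤ J ^ 2 := by
        apply pow_le_pow_left₀ (abs_nonneg _) step3
    _ ≤ (2 * ε) * I := hcs

/-- Thin-layer trace estimate: for a bounded rectangle `Σ ⊂ ℝ^{n-1}` there is a constant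
`C > 0`, independent of `ε` and `φ`, such that for every `ε > 0` and every `C¹` function
`φ` on the layer, the `L²(Σ)` distance between the top trace `φ(·, ε)` and the vertical
average `φ̄` is bounded by `C √ε ‖∂ₙ φ‖_{L²(Ω_ε^M)}`. -/
theorem stmt_4 (m : ℕ) (l : Fin m → ℝ) (hl : ∀ i, 0 < l i) :
    ∃ C > 0, ∀ (ε : ℝ), 0 < ε → ∀ (φ : (Fin m → ℝ) → ℝ → ℝ),
      ContDiff ℝ 1 (fun p : (Fin m → ℝ) × ℝ => φ p.1 p.2) →
      Real.sqrt (∫ x in Set.univ.pi (fun i => Set.Ioo (0 : ℝ) (l i)),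
          (φ x ε - (1 / (2 * ε)) * ∫ t in Set.Ioo (-ε) ε, φ x t) ^ 2)
        ≤ C * Real.sqrt ε *
          Real.sqrt (∫ x in Set.univ.pi (fun i => Set.Ioo (0 : ℝ) (l i)),
            ∫ t in Set.Ioo (-ε) ε, (deriv (φ x) t) ^ 2) := by
  refine ⟨Real.sqrt 2, Real.sqrt_pos.mpr two_pos, ?_⟩
  intro ε hε φ hφ
  set Sig := Set.univ.pi (fun i => Set.Ioo (0 : ℝ) (l i)) with hSig
  set Φ := fun p : (Fin m → ℝ) × ℝ => φ p.1 p.2 with hΦ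
  -- each slice is C¹
  have hslice : ∀ x : Fin m → ℝ, ContDiff ℝ 1 (φ x) := by
    intro x
    exact hφ.comp ((contDiff_const.prodMk contDiff_id))
  -- derivative identity
  have hderiv : ∀ (x : Fin m → ℝ) (t : ℝ),
      deriv (φ x) t = fderiv ℝ Φ (x, t) (0, 1) := by
    intro x t
    have h1 : HasFDerivAt Φ (fderiv ℝ Φ (x, t)) (x, t) :=
      (hφ.differentiable one_ne_zero (x, t)).hasFDerivAt
    have h2 : HasDerivAt (fun s : ℝ => ((x, s) : (Fin m → ℝ) × ℝ)) (0, 1) t :=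
      (hasDerivAt_const t x).prodMk (hasDerivAt_id t)
    have h3 : HasDerivAt (φ x) ((fderiv ℝ Φ (x, t)) (0, 1)) t := h1.comp_hasDerivAt t h2
    exact h3.deriv
  set F := fun x : Fin m → ℝ => ∫ t in Set.Ioo (-ε) ε, (deriv (φ x) t) ^ 2 with hF
  have hFnn : ∀ x, 0 ≤ F x := fun x => integral_nonneg fun t => sq_nonneg _
  -- integrability of F on Sig
  have hD : Continuous fun p : (Fin m → ℝ) × ℝ => (fderiv ℝ Φ p (0, 1)) ^ 2 := by
    have h0 : Continuous fun p : (Fin m → ℝ) × ℝ => fderiv ℝ Φ p (0, 1) :=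
      (hφ.continuous_fderiv one_ne_zero).clm_apply (continuous_const (y := ((0 : Fin m → ℝ), (1 : ℝ))))
    exact h0.pow 2
  have hK : IsCompact ((Set.univ.pi fun i => Set.Icc (0 : ℝ) (l i)) ×ˢ Set.Icc (-ε) ε) :=
    (isCompact_univ_pi fun i => isCompact_Icc).prod isCompact_Icc
  have hsub : (Sig ×ˢ Set.Ioo (-ε) ε)
      ⊆ (Set.univ.pi fun i => Set.Icc (0 : ℝ) (l i)) ×ˢ Set.Icc (-ε) ε :=
    Set.prod_mono (Set.pi_mono fun i _ => Ioo_subset_Icc_self) Ioo_subset_Icc_self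
  have hint2 : IntegrableOn (fun p : (Fin m → ℝ) × ℝ => (fderiv ℝ Φ p (0, 1)) ^ 2)
      (Sig ×ˢ Set.Ioo (-ε) ε) volume :=
    (hD.continuousOn.integrableOn_compact hK).mono_set hsub
  have hintF : IntegrableOn F Sig volume := by
    have hprod : Integrable (fun p : (Fin m → ℝ) × ℝ => (fderiv ℝ Φ p (0, 1)) ^ 2)
        ((volume.restrict Sig).prod (volume.restrict (Set.Ioo (-ε) ε))) := by
      rw [Measure.prod_restrict]
      rw [← Measure.volume_eq_prod]
      exact hint2
    have hIF : Integrable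
        (fun x => ∫ t, (fderiv ℝ Φ (x, t) (0, 1)) ^ 2 ∂(volume.restrict (Set.Ioo (-ε) ε)))
        (volume.restrict Sig) := hprod.integral_prod_left
    refine hIF.congr (Filter.Eventually.of_forall fun x => ?_)
    simp only [hF]
    exact integral_congr_ae (Filter.Eventually.of_forall fun t => by simp [hderiv x t])
  -- pointwise estimate and monotonicity
  have hmono : (∫ x in Sig, (φ x ε - (1 / (2 * ε)) * ∫ t in Set.Ioo (-ε) ε, φ x t) ^ 2)
      ≤ ∫ x in Sig, (2 * ε) * F x := by
    apply integral_mono_of_nonneg (Filter.Eventually.of_forall fun x => sq_nonneg _)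
      (hintF.const_mul _)
      (Filter.Eventually.of_forall fun x => pointwise_est ε hε (φ x) (hslice x))
  have hFint' : (∫ x in Sig, (2 * ε) * F x) = (2 * ε) * ∫ x in Sig, F x := integral_const_mul _ _
  have hstep : (∫ x in Sig, (φ x ε - (1 / (2 * ε)) * ∫ t in Set.Ioo (-ε) ε, φ x t) ^ 2)
      ≤ (2 * ε) * ∫ x in Sig, F x := by rw [← hFint']; exact hmono
  calc Real.sqrt (∫ x in Sig, (φ x ε - (1 / (2 * ε)) * ∫ t in Set.Ioo (-ε) ε, φ x t) ^ 2)
      ≤ Real.sqrt ((2 * ε) * ∫ x in Sig, F x) := Real.sqrt_le_sqrt hstep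
    _ = Real.sqrt 2 * Real.sqrt ε * Real.sqrt (∫ x in Sig, F x) := by
        rw [mul_assoc, Real.sqrt_mul (by norm_num : (0:ℝ) ≤ 2),
          Real.sqrt_mul hε.le, mul_assoc]
end

section
/- Let Y := (0,1)^{n−1}, Z_∞ := Y × ℝ, and let h : Z_∞ → ℝⁿ be a C¹ vector field, Y-periodic in the first n−1 variables, with ∇·h = 0 on Z_∞, and assume |h(y)| ≤ M e^{−γ|y_n|} for constants M, γ > 0. Then the function F(s) := ∫_Y h_n(ȳ, s) dȳ is constant in s ∈ ℝ, and moreover F(s) = 0 for all s ∈ ℝ. -/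
open MeasureTheory Set
open scoped BigOperators


noncomputable def Lmap (m : ℕ) : (Fin (m+1) → ℝ) →L[ℝ] (Fin m → ℝ) × ℝ :=
  (ContinuousLinearMap.pi fun k => ContinuousLinearMap.proj (Fin.castSucc k)).prod
    (ContinuousLinearMap.proj (Fin.last m))

noncomputable def Emap (m : ℕ) : ((Fin m → ℝ) × ℝ) →L[ℝ] (Fin (m+1) → ℝ) :=
  ContinuousLinearMap.pi fun i =>
    Fin.lastCases (ContinuousLinearMap.snd ℝ (Fin m → ℝ) ℝ)
      (fun k => (ContinuousLinearMap.proj k).comp (ContinuousLinearMap.fst ℝ (Fin m → ℝ) ℝ)) i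

lemma Lmap_apply (m : ℕ) (x : Fin (m+1) → ℝ) :
    Lmap m x = (fun k => x (Fin.castSucc k), x (Fin.last m)) := rfl

lemma Emap_castSucc (m : ℕ) (v : (Fin m → ℝ) × ℝ) (k : Fin m) :
    Emap m v (Fin.castSucc k) = v.1 k := by
  simp [Emap]

lemma Emap_last (m : ℕ) (v : (Fin m → ℝ) × ℝ) :
    Emap m v (Fin.last m) = v.2 := by
  simp [Emap]

lemma insertNth_indep {m : ℕ} {i q : Fin (m+1)} (hq : q ≠ i) (c c' : ℝ) (x : Fin m → ℝ) :
    Fin.insertNth (α := fun _ => ℝ) i c x q = Fin.insertNth (α := fun _ => ℝ) i c' x q := by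
  obtain ⟨j, rfl⟩ := Fin.exists_succAbove_eq hq
  simp

lemma key (m : ℕ) (h : ((Fin m → ℝ) × ℝ) → (Fin m → ℝ) × ℝ)
    (hC1 : ContDiff ℝ 1 h)
    (hper : ∀ (p : (Fin m → ℝ) × ℝ) (k : Fin m),
      h ((fun j => p.1 j + if j = k then 1 else 0), p.2) = h p)
    (hdiv : ∀ p : (Fin m → ℝ) × ℝ,
      (∑ k : Fin m, fderiv ℝ (fun q => (h q).1 k) p ((fun j => if j = k then (1:ℝ) else 0), (0:ℝ)))
        + fderiv ℝ (fun q => (h q).2) p ((0 : Fin m → ℝ), (1:ℝ)) = 0)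
    (s₁ s₂ : ℝ) (hs : s₁ ≤ s₂) :
    (∫ x in Icc (0:Fin m → ℝ) 1, (h (x, s₁)).2) = ∫ x in Icc (0:Fin m → ℝ) 1, (h (x, s₂)).2 := by
  set a : Fin (m+1) → ℝ := fun i => if i = Fin.last m then s₁ else 0 with ha
  set b : Fin (m+1) → ℝ := fun i => if i = Fin.last m then s₂ else 1 with hb
  have hle : a ≤ b := by
    intro i; by_cases hi : i = Fin.last m <;> simp [ha, hb, hi, hs]
  set F : (Fin (m+1) → ℝ) → Fin (m+1) → ℝ := fun x => Emap m (h (Lmap m x)) with hF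
  set F' : (Fin (m+1) → ℝ) → (Fin (m+1) → ℝ) →L[ℝ] (Fin (m+1) → ℝ) :=
    fun x => (Emap m).comp ((fderiv ℝ h (Lmap m x)).comp (Lmap m : (Fin (m+1) → ℝ) →L[ℝ] _)) with hF'
  have hdifh : Differentiable ℝ h := hC1.differentiable one_ne_zero
  have hderiv : ∀ x, HasFDerivAt F (F' x) x := fun x =>
    ((Emap m).hasFDerivAt).comp x (((hdifh (Lmap m x)).hasFDerivAt).comp x (Lmap m).hasFDerivAt)
  have hf1 : ∀ (p) (k : Fin m) (v), fderiv ℝ (fun q => (h q).1 k) p v = (fderiv ℝ h p v).1 k := by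
    intro p k v
    have h1 : HasFDerivAt (fun q => (h q).1 k)
        (((ContinuousLinearMap.proj k).comp (ContinuousLinearMap.fst ℝ (Fin m → ℝ) ℝ)).comp
          (fderiv ℝ h p)) p :=
      (((ContinuousLinearMap.proj k).comp
        (ContinuousLinearMap.fst ℝ (Fin m → ℝ) ℝ)).hasFDerivAt).comp p (hdifh p).hasFDerivAt
    rw [h1.fderiv]; rfl
  have hf2 : ∀ (p) (v), fderiv ℝ (fun q => (h q).2) p v = (fderiv ℝ h p v).2 := by
    intro p v
    have h1 : HasFDerivAt (fun q => (h q).2)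
        ((ContinuousLinearMap.snd ℝ (Fin m → ℝ) ℝ).comp (fderiv ℝ h p)) p :=
      ((ContinuousLinearMap.snd ℝ (Fin m → ℝ) ℝ).hasFDerivAt).comp p (hdifh p).hasFDerivAt
    rw [h1.fderiv]; rfl
  have hdiv0 : ∀ x, (∑ i, F' x (Pi.single i 1) i) = 0 := by
    intro x
    have e1 : ∀ k : Fin m, Lmap m (Pi.single (Fin.castSucc k) (1:ℝ)) =
        ((fun j => if j = k then (1:ℝ) else 0), (0:ℝ)) := by
      intro k
      rw [Lmap_apply]
      refine Prod.ext (funext fun j => ?_) ?_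
      · simp [Pi.single_apply, Fin.castSucc_inj]
      · simp [Pi.single_apply, ((Fin.castSucc_lt_last k).ne').symm, (Fin.castSucc_lt_last k).ne]
    have e2 : Lmap m (Pi.single (Fin.last m) (1:ℝ)) = ((0 : Fin m → ℝ), (1:ℝ)) := by
      rw [Lmap_apply]
      refine Prod.ext (funext fun j => ?_) ?_
      · simp [Pi.single_apply, (Fin.castSucc_lt_last j).ne]
      · simp
    rw [Fin.sum_univ_castSucc]
    have hterm : ∀ k : Fin m, F' x (Pi.single (Fin.castSucc k) 1) (Fin.castSucc k)
        = fderiv ℝ (fun q => (h q).1 k) (Lmap m x) ((fun j => if j = k then (1:ℝ) else 0), (0:ℝ)) := by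
      intro k
      rw [hF']
      simp only [ContinuousLinearMap.comp_apply, ContinuousLinearMap.coe_comp', Function.comp_apply]
      rw [e1 k, Emap_castSucc, hf1]
    have hlast : F' x (Pi.single (Fin.last m) 1) (Fin.last m)
        = fderiv ℝ (fun q => (h q).2) (Lmap m x) ((0 : Fin m → ℝ), (1:ℝ)) := by
      rw [hF']
      simp only [ContinuousLinearMap.comp_apply, ContinuousLinearMap.coe_comp', Function.comp_apply]
      rw [e2, Emap_last, hf2]
    rw [hlast, Finset.sum_congr rfl (fun k _ => hterm k)]
    exact hdiv (Lmap m x)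
  have hdt := integral_divergence_of_hasFDerivAt_off_countable a b hle F F' ∅
    countable_empty
    (((Emap m).continuous.comp (hC1.continuous.comp (Lmap m).continuous)).continuousOn)
    (fun x _ => hderiv x)
    (by
      have hz : (fun x : Fin (m+1) → ℝ => ∑ i, F' x (Pi.single i 1) i) = fun _ => (0:ℝ) :=
        funext hdiv0
      rw [IntegrableOn, hz]
      exact integrable_zero _ _ _)
  have hlat : ∀ k : Fin m,
      ((∫ x in Icc (a ∘ Fin.succAbove (Fin.castSucc k)) (b ∘ Fin.succAbove (Fin.castSucc k)),
          F (Fin.insertNth (Fin.castSucc k) (b (Fin.castSucc k)) x) (Fin.castSucc k)) -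
        ∫ x in Icc (a ∘ Fin.succAbove (Fin.castSucc k)) (b ∘ Fin.succAbove (Fin.castSucc k)),
          F (Fin.insertNth (Fin.castSucc k) (a (Fin.castSucc k)) x) (Fin.castSucc k)) = 0 := by
    intro k
    have hpt : ∀ x : Fin m → ℝ,
        F (Fin.insertNth (Fin.castSucc k) (b (Fin.castSucc k)) x) (Fin.castSucc k)
        = F (Fin.insertNth (Fin.castSucc k) (a (Fin.castSucc k)) x) (Fin.castSucc k) := by
      intro x
      have hbv : b (Fin.castSucc k) = 1 := by simp [hb, (Fin.castSucc_lt_last k).ne]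
      have hav : a (Fin.castSucc k) = 0 := by simp [ha, (Fin.castSucc_lt_last k).ne]
      rw [hbv, hav]
      simp only [hF]
      rw [Emap_castSucc, Emap_castSucc]
      have harg : Lmap m (Fin.insertNth (α := fun _ => ℝ) (Fin.castSucc k) 1 x)
          = ((fun j => (Lmap m (Fin.insertNth (α := fun _ => ℝ) (Fin.castSucc k) 0 x)).1 j
              + if j = k then 1 else 0),
             (Lmap m (Fin.insertNth (α := fun _ => ℝ) (Fin.castSucc k) 0 x)).2) := by
        rw [Lmap_apply, Lmap_apply]
        refine Prod.ext (funext fun j => ?_) ?_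
        · dsimp only
          by_cases hj : j = k
          · subst hj; simp [Fin.insertNth_apply_same]
          · rw [insertNth_indep (i := Fin.castSucc k) (q := Fin.castSucc j)
              (by simpa [Fin.castSucc_inj] using hj) 1 0 x]
            simp [hj]
        · exact insertNth_indep ((Fin.castSucc_lt_last k).ne') 1 0 x
      rw [harg, hper]
    simp only [hpt, sub_self]
  have hdom : Icc (a ∘ Fin.succAbove (Fin.last m)) (b ∘ Fin.succAbove (Fin.last m))
      = Icc (0:Fin m → ℝ) 1 := by
    have h1 : (a ∘ Fin.succAbove (Fin.last m)) = (0 : Fin m → ℝ) := by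
      funext j; simp [ha, Fin.succAbove_last, (Fin.castSucc_lt_last j).ne]
    have h2 : (b ∘ Fin.succAbove (Fin.last m)) = (1 : Fin m → ℝ) := by
      funext j; simp [hb, Fin.succAbove_last, (Fin.castSucc_lt_last j).ne]
    rw [h1, h2]
  have hFv : ∀ (c : ℝ) (x : Fin m → ℝ),
      F (Fin.insertNth (α := fun _ => ℝ) (Fin.last m) c x) (Fin.last m) = (h (x, c)).2 := by
    intro c x
    simp only [hF]
    rw [Emap_last]
    have : Lmap m (Fin.insertNth (α := fun _ => ℝ) (Fin.last m) c x) = (x, c) := by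
      rw [Lmap_apply]
      refine Prod.ext (funext fun j => ?_) ?_ <;>
        simp [Fin.insertNth_last']
    rw [this]
  have hav : a (Fin.last m) = s₁ := by simp [ha]
  have hbv : b (Fin.last m) = s₂ := by simp [hb]
  simp only [hdiv0, integral_zero] at hdt
  rw [Fin.sum_univ_castSucc] at hdt
  rw [Finset.sum_congr rfl (fun k _ => hlat k), Finset.sum_const_zero, zero_add,
    hdom, hav, hbv] at hdt
  simp only [hFv] at hdt
  linarith

/-- For a `C¹`, laterally `Y`-periodic, divergence-free vector field `h` on the infinite
strip `Z_∞ = Y × ℝ` (with `Y = (0,1)^{n-1}`) decaying exponentially as `|y_n| → ∞`, the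
flux `F(s) = ∫_Y h_n(ȳ, s) dȳ` through each horizontal cross-section is constant in `s`,
and in fact vanishes identically. -/
theorem stmt_11 (m : ℕ) (h : ((Fin m → ℝ) × ℝ) → (Fin m → ℝ) × ℝ)
    (hC1 : ContDiff ℝ 1 h)
    (hper : ∀ (p : (Fin m → ℝ) × ℝ) (k : Fin m),
      h ((fun j => p.1 j + if j = k then 1 else 0), p.2) = h p)
    (hdiv : ∀ p : (Fin m → ℝ) × ℝ,
      (∑ k : Fin m, fderiv ℝ (fun q => (h q).1 k) p ((fun j => if j = k then (1:ℝ) else 0), (0:ℝ)))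
        + fderiv ℝ (fun q => (h q).2) p ((0 : Fin m → ℝ), (1:ℝ)) = 0)
    (M γ : ℝ) (hM : 0 < M) (hγ : 0 < γ)
    (hdecay : ∀ p : (Fin m → ℝ) × ℝ,
      Real.sqrt ((∑ k : Fin m, (h p).1 k ^ 2) + (h p).2 ^ 2) ≤ M * Real.exp (-γ * |p.2|)) :
    (∀ s₁ s₂ : ℝ,
      (∫ y in Set.univ.pi (fun _ : Fin m => Set.Ioo (0:ℝ) 1), (h (y, s₁)).2)
        = ∫ y in Set.univ.pi (fun _ : Fin m => Set.Ioo (0:ℝ) 1), (h (y, s₂)).2) ∧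
    (∀ s : ℝ, (∫ y in Set.univ.pi (fun _ : Fin m => Set.Ioo (0:ℝ) 1), (h (y, s)).2) = 0) := by
  have hIoo : ∀ s : ℝ,
      (∫ y in Set.univ.pi (fun _ : Fin m => Set.Ioo (0:ℝ) 1), (h (y, s)).2)
        = ∫ x in Icc (0:Fin m → ℝ) 1, (h (x, s)).2 := by
    intro s
    have hae : (Set.univ.pi fun _ : Fin m => Set.Ioo (0:ℝ) 1) =ᵐ[volume] Icc (0:Fin m → ℝ) 1 := by
      rw [volume_pi]
      exact Measure.univ_pi_Ioo_ae_eq_Icc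
    exact setIntegral_congr_set hae
  have Fconst : ∀ s₁ s₂ : ℝ,
      (∫ y in Set.univ.pi (fun _ : Fin m => Set.Ioo (0:ℝ) 1), (h (y, s₁)).2)
        = ∫ y in Set.univ.pi (fun _ : Fin m => Set.Ioo (0:ℝ) 1), (h (y, s₂)).2 := by
    intro s₁ s₂
    rw [hIoo, hIoo]
    rcases le_total s₁ s₂ with hc | hc
    · exact key m h hC1 hper hdiv s₁ s₂ hc
    · exact (key m h hC1 hper hdiv s₂ s₁ hc).symm
  refine ⟨Fconst, ?_⟩
  have hvol : volume (Set.univ.pi fun _ : Fin m => Set.Ioo (0:ℝ) 1) = 1 := by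
    simp [volume_pi_pi]
  have hb : ∀ s : ℝ,
      |∫ y in Set.univ.pi (fun _ : Fin m => Set.Ioo (0:ℝ) 1), (h (y, s)).2|
        ≤ M * Real.exp (-γ * |s|) := by
    intro s
    have hmeas : volume (Set.univ.pi fun _ : Fin m => Set.Ioo (0:ℝ) 1) < ⊤ := by
      rw [hvol]; exact ENNReal.one_lt_top
    have hbd : ∀ y ∈ Set.univ.pi fun _ : Fin m => Set.Ioo (0:ℝ) 1,
        ‖(h (y, s)).2‖ ≤ M * Real.exp (-γ * |s|) := by
      intro y _
      have hd := hdecay (y, s)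
      have h2 : ((h (y, s)).2) ^ 2 ≤ (∑ k, (h (y, s)).1 k ^ 2) + (h (y, s)).2 ^ 2 :=
        le_add_of_nonneg_left (Finset.sum_nonneg fun _ _ => sq_nonneg _)
      calc ‖(h (y, s)).2‖ = Real.sqrt (((h (y, s)).2) ^ 2) := by
            rw [Real.sqrt_sq_eq_abs, Real.norm_eq_abs]
        _ ≤ _ := le_trans (Real.sqrt_le_sqrt h2) hd
    have hcont : Continuous fun y : Fin m → ℝ => (h (y, s)).2 :=
      continuous_snd.comp (hC1.continuous.comp (continuous_id.prodMk continuous_const))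
    have := norm_setIntegral_le_of_norm_le_const hmeas hbd
    simpa [measureReal_def, hvol] using this
  set c := ∫ y in Set.univ.pi (fun _ : Fin m => Set.Ioo (0:ℝ) 1), (h (y, 0)).2 with hc
  have hcs : ∀ s : ℝ, 0 ≤ s → |c| ≤ M * Real.exp (-γ * s) := by
    intro s hs0
    have := hb s
    rw [← Fconst 0 s, ← hc] at this
    rwa [abs_of_nonneg hs0] at this
  have htend : Filter.Tendsto (fun s : ℝ => M * Real.exp (-γ * s)) Filter.atTop (nhds 0) := by
    have h1 : Filter.Tendsto (fun s : ℝ => -γ * s) Filter.atTop Filter.atBot :=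
      Filter.Tendsto.const_mul_atTop_of_neg (by linarith) Filter.tendsto_id
    have h2 := Real.tendsto_exp_atBot.comp h1
    have h3 := h2.const_mul M
    simpa using h3
  have hc0 : |c| ≤ 0 :=
    ge_of_tendsto htend (by
      filter_upwards [Filter.eventually_ge_atTop 0] with s hs using hcs s hs)
  have hczero : c = 0 := abs_nonpos_iff.mp hc0
  intro s
  rw [Fconst s 0, ← hc, hczero]
end
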